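/- Let A ∈ ℝ^{n×n} be invertible, Q = AᵀA, Γ the lower triangular part of Q, and J = I − AΓ^{-1}Aᵀ. Then the spectral radius of (I − Γ^{-T}Q)(I − Γ^{-1}Q) equals ‖J‖², and in particular is at least ρ(J)². -/

import Mathlib

open Matrix Polynomial Real

noncomputable def lowerTri {n : ℕ} (Q : Matrix (Fin n) (Fin n) ℝ) : Matrix (Fin n) (Fin n) ℝ :=
  fun i j => if j ≤ i then Q i j else 0

noncomputable def l2norm {n : ℕ} (M : Matrix (Fin n) (Fin n) ℝ) : ℝ :=
  ‖(Matrix.toEuclideanCLM (𝕜 := ℝ) M : EuclideanSpace ℝ (Fin n) →L[ℝ] EuclideanSpace ℝ (Fin n))‖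

noncomputable def specRad {n : ℕ} (M : Matrix (Fin n) (Fin n) ℝ) : ℝ :=
  sSup (Set.image (fun z : ℂ => ‖z‖) (spectrum ℂ (M.map (algebraMap ℝ ℂ))))

lemma real_spec_aux {n : ℕ} (R : Matrix (Fin n) (Fin n) ℝ) (x : ℝ) :
    (x : ℂ) ∈ spectrum ℂ (R.map (algebraMap ℝ ℂ)) ↔ x ∈ spectrum ℝ R := by
  rw [spectrum.mem_iff, spectrum.mem_iff]
  have h1 : algebraMap ℂ (Matrix (Fin n) (Fin n) ℂ) (x : ℂ) - R.map (algebraMap ℝ ℂ)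
      = (algebraMap ℝ (Matrix (Fin n) (Fin n) ℝ) x - R).map (algebraMap ℝ ℂ) := by
    rw [Matrix.map_sub _ (by simp)]
    congr 1
    ext i j
    simp [Matrix.algebraMap_matrix_apply]
    split <;> simp_all
  have h2 : ((algebraMap ℝ (Matrix (Fin n) (Fin n) ℝ) x - R).map (algebraMap ℝ ℂ)).det
      = algebraMap ℝ ℂ ((algebraMap ℝ (Matrix (Fin n) (Fin n) ℝ) x - R).det) :=
    ((algebraMap ℝ ℂ).map_det _).symm
  rw [h1, Matrix.isUnit_iff_isUnit_det, Matrix.isUnit_iff_isUnit_det, h2]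
  simp [isUnit_iff_ne_zero]

lemma star_map_aux {n : ℕ} (R : Matrix (Fin n) (Fin n) ℝ) :
    star (R.map (algebraMap ℝ ℂ)) = Rᵀ.map (algebraMap ℝ ℂ) := by
  ext i j
  simp [Matrix.star_eq_conjTranspose, Matrix.conjTranspose_apply, Complex.conj_ofReal]

lemma star_real_aux {n : ℕ} (R : Matrix (Fin n) (Fin n) ℝ) : star R = Rᵀ := by
  ext i j
  simp [Matrix.star_eq_conjTranspose, Matrix.conjTranspose_apply]

lemma norm_complexify_aux {n : ℕ} (hn : 0 < n) (R : Matrix (Fin n) (Fin n) ℝ) :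
    ‖(Matrix.toEuclideanCLM (𝕜 := ℂ) (R.map (algebraMap ℝ ℂ)) :
        EuclideanSpace ℂ (Fin n) →L[ℂ] EuclideanSpace ℂ (Fin n))‖ = l2norm R ∧
    sSup (Set.image (fun z : ℂ => ‖z‖) (spectrum ℂ ((Rᵀ * R).map (algebraMap ℝ ℂ))))
      = (l2norm R) ^ 2 := by
  haveI : Nonempty (Fin n) := ⟨⟨0, hn⟩⟩
  set T : EuclideanSpace ℂ (Fin n) →L[ℂ] EuclideanSpace ℂ (Fin n) :=
    Matrix.toEuclideanCLM (𝕜 := ℂ) (R.map (algebraMap ℝ ℂ)) with hT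
  set Tr : EuclideanSpace ℝ (Fin n) →L[ℝ] EuclideanSpace ℝ (Fin n) :=
    Matrix.toEuclideanCLM (𝕜 := ℝ) R with hTr
  set a : EuclideanSpace ℂ (Fin n) →L[ℂ] EuclideanSpace ℂ (Fin n) := star T * T with ha
  set S : EuclideanSpace ℝ (Fin n) →L[ℝ] EuclideanSpace ℝ (Fin n) := star Tr * Tr with hS
  have hmap : (Rᵀ * R).map (algebraMap ℝ ℂ)
      = star (R.map (algebraMap ℝ ℂ)) * (R.map (algebraMap ℝ ℂ)) := by
    rw [star_map_aux]; exact Matrix.map_mul (f := algebraMap ℝ ℂ)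
  have haK : Matrix.toEuclideanCLM (𝕜 := ℂ) ((Rᵀ * R).map (algebraMap ℝ ℂ)) = a := by
    rw [hmap, _root_.map_mul, map_star]
  have hspec : spectrum ℂ ((Rᵀ * R).map (algebraMap ℝ ℂ)) = spectrum ℂ a := by
    rw [← haK]; exact (AlgEquiv.spectrum_eq _ _).symm
  have hSK : Matrix.toEuclideanCLM (𝕜 := ℝ) (Rᵀ * R) = S := by
    rw [show Rᵀ * R = star R * R from by rw [star_real_aux], _root_.map_mul, map_star]
  have hsa : IsSelfAdjoint a := IsSelfAdjoint.star_mul_self T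
  have hna : ‖a‖ = ‖T‖ ^ 2 := by
    rw [ha, ContinuousLinearMap.star_eq_adjoint, ContinuousLinearMap.mul_def,
      ContinuousLinearMap.norm_adjoint_comp_self, sq]
  have hnS : ‖S‖ = ‖Tr‖ ^ 2 := by
    rw [hS, ContinuousLinearMap.star_eq_adjoint, ContinuousLinearMap.mul_def,
      ContinuousLinearMap.norm_adjoint_comp_self, sq]
  -- every element of the spectrum of a is real and bounded by ‖Tr‖²
  have hbound : ∀ z ∈ spectrum ℂ a, ‖z‖ ≤ ‖Tr‖ ^ 2 := by
    intro z hz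
    have hre : z = (z.re : ℂ) := hsa.mem_spectrum_eq_re hz
    have h1 : (z.re : ℂ) ∈ spectrum ℂ ((Rᵀ * R).map (algebraMap ℝ ℂ)) := by
      rw [hspec]; rw [hre] at hz; exact hz
    have h2 : z.re ∈ spectrum ℝ (Rᵀ * R) := (real_spec_aux _ _).mp h1
    have h3 : z.re ∈ spectrum ℝ S := by
      rw [← hSK]; rwa [AlgEquiv.spectrum_eq]
    have h4 : ‖z.re‖ ≤ ‖S‖ := spectrum.norm_le_norm_of_mem h3
    calc ‖z‖ = ‖z‖ := rfl
      _ = ‖((z.re : ℂ))‖ := by rw [← hre]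
      _ = ‖z.re‖ := by simp
      _ ≤ ‖S‖ := h4
      _ = ‖Tr‖ ^ 2 := hnS
  set r : ℝ := sSup (Set.image (fun z : ℂ => ‖z‖) (spectrum ℂ a)) with hr
  have hbdd : BddAbove (Set.image (fun z : ℂ => ‖z‖) (spectrum ℂ a)) := by
    refine ⟨‖a‖, ?_⟩
    rintro - ⟨z, hz, rfl⟩
    exact spectrum.norm_le_norm_of_mem hz
  have hr_nonneg : 0 ≤ r := by
    apply Real.sSup_nonneg
    rintro - ⟨z, hz, rfl⟩
    exact norm_nonneg z
  have hra : r = ‖a‖ := by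
    apply le_antisymm
    · apply Real.sSup_le _ (norm_nonneg a)
      rintro - ⟨z, hz, rfl⟩
      exact spectrum.norm_le_norm_of_mem hz
    · have h1 : spectralRadius ℂ a ≤ ENNReal.ofReal r := by
        rw [spectralRadius]
        refine iSup₂_le fun z hz => ?_
        have hzr : ‖z‖ ≤ r := le_csSup hbdd ⟨z, hz, rfl⟩
        calc (‖z‖₊ : ENNReal) = ENNReal.ofReal ‖z‖ := (ofReal_norm z).symm
          _ ≤ ENNReal.ofReal r := ENNReal.ofReal_le_ofReal hzr
      have h2 : (spectralRadius ℂ a).toReal ≤ (ENNReal.ofReal r).toReal :=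
        ENNReal.toReal_mono ENNReal.ofReal_ne_top h1
      rwa [hsa.toReal_spectralRadius_complex_eq_norm, ENNReal.toReal_ofReal hr_nonneg] at h2
  -- r ≤ ‖Tr‖², hence ‖T‖ ≤ ‖Tr‖
  have hrle : r ≤ ‖Tr‖ ^ 2 := by
    apply Real.sSup_le _ (by positivity)
    rintro - ⟨z, hz, rfl⟩
    exact hbound z hz
  have hTle : ‖T‖ ≤ ‖Tr‖ := by
    have : ‖T‖ ^ 2 ≤ ‖Tr‖ ^ 2 := by rw [← hna, ← hra]; exact hrle
    exact (pow_le_pow_iff_left₀ (norm_nonneg _) (norm_nonneg _) two_ne_zero).mp this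
  -- ‖Tr‖ ≤ ‖T‖ via the embedding of real vectors
  have hTge : ‖Tr‖ ≤ ‖T‖ := by
    refine ContinuousLinearMap.opNorm_le_bound _ (norm_nonneg T) (fun x => ?_)
    set xf : Fin n → ℝ := WithLp.equiv 2 _ x with hxf
    set y : EuclideanSpace ℂ (Fin n) :=
      (WithLp.equiv 2 _).symm (fun i => (xf i : ℂ)) with hy
    have hny : ‖y‖ = ‖x‖ := by
      rw [EuclideanSpace.norm_eq, EuclideanSpace.norm_eq]
      congr 1
      apply Finset.sum_congr rfl
      intro i _
      simp [hy, hxf, Complex.norm_real]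
    have hx : x = (WithLp.equiv 2 _).symm xf := rfl
    have h1 : Tr x = (WithLp.equiv 2 _).symm (R *ᵥ xf) := by
      exact rfl
    have h2 : T y = (WithLp.equiv 2 _).symm
        ((R.map (algebraMap ℝ ℂ)) *ᵥ (fun i => (xf i : ℂ))) := by
      exact rfl
    have h3 : ‖Tr x‖ = ‖T y‖ := by
      rw [h1, h2, EuclideanSpace.norm_eq, EuclideanSpace.norm_eq]
      congr 1
      apply Finset.sum_congr rfl
      intro i _
      have := (algebraMap ℝ ℂ).map_mulVec R xf i
      simp only [Function.comp_def] at this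
      show ‖(R *ᵥ xf) i‖ ^ 2 = ‖(R.map (algebraMap ℝ ℂ) *ᵥ fun j => ((xf j : ℂ))) i‖ ^ 2
      have h5 : (fun j => ((xf j : ℂ))) = fun j => algebraMap ℝ ℂ (xf j) := rfl
      rw [h5, ← this]
      simp
    rw [h3, ← hny]
    exact T.le_opNorm y
  have hTTr : ‖T‖ = ‖Tr‖ := le_antisymm hTle hTge
  constructor
  · exact hTTr
  · rw [hspec]
    show r = l2norm R ^ 2
    rw [hra, hna, hTTr]
    rfl

/-- The spectral radius of the sGS-CD update matrix equals ‖J‖² with J = I - AΓ⁻¹Aᵀ,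
which is at least ρ(J)². -/
theorem stmt4 {n : ℕ} (A : Matrix (Fin n) (Fin n) ℝ) (hA : IsUnit A.det)
    (Q Γ : Matrix (Fin n) (Fin n) ℝ) (hQ : Q = Aᵀ * A) (hΓ : Γ = lowerTri Q)
    (hΓu : IsUnit Γ.det)
    (J : Matrix (Fin n) (Fin n) ℝ) (hJ : J = 1 - A * Γ⁻¹ * Aᵀ) :
    specRad ((1 - (Γᵀ)⁻¹ * Q) * (1 - Γ⁻¹ * Q)) = (l2norm J) ^ 2 ∧
    (l2norm J) ^ 2 ≥ (specRad J) ^ 2 := by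
  rcases Nat.eq_zero_or_pos n with hn | hn
  · subst hn
    haveI : Subsingleton (Matrix (Fin 0) (Fin 0) ℂ) := by
      constructor; intro a b; ext i j; exact absurd i.2 (by omega)
    haveI : Subsingleton (EuclideanSpace ℝ (Fin 0) →L[ℝ] EuclideanSpace ℝ (Fin 0)) := by
      constructor; intro a b
      ext x i
      exact absurd i.2 (by omega)
    have hempty : ∀ M : Matrix (Fin 0) (Fin 0) ℝ, specRad M = 0 := by
      intro M
      have : spectrum ℂ (M.map (algebraMap ℝ ℂ)) = ∅ := by
        ext z
        simp [spectrum.mem_iff, isUnit_of_subsingleton]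
      rw [specRad, this]
      simp [Real.sSup_empty]
    have hl2 : l2norm J = 0 := by
      rw [l2norm, Subsingleton.elim (Matrix.toEuclideanCLM (𝕜 := ℝ) J) 0, norm_zero]
    rw [hempty, hempty, hl2]
    norm_num
  · -- key matrix identity
    have hconj : (1 - (Γᵀ)⁻¹ * Q) * (1 - Γ⁻¹ * Q) = A⁻¹ * ((Jᵀ * J) * A) := by
      have hJt : Jᵀ = 1 - A * (Γᵀ)⁻¹ * Aᵀ := by
        rw [hJ, Matrix.transpose_sub, Matrix.transpose_one, Matrix.transpose_mul,
          Matrix.transpose_mul, Matrix.transpose_transpose, Matrix.transpose_nonsing_inv]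
        noncomm_ring
      have hmain : A * ((1 - (Γᵀ)⁻¹ * Q) * (1 - Γ⁻¹ * Q)) = (Jᵀ * J) * A := by
        rw [hJt, hJ, hQ]
        noncomm_ring
      calc (1 - (Γᵀ)⁻¹ * Q) * (1 - Γ⁻¹ * Q)
          = A⁻¹ * (A * ((1 - (Γᵀ)⁻¹ * Q) * (1 - Γ⁻¹ * Q))) := by
            rw [← Matrix.mul_assoc, Matrix.nonsing_inv_mul _ hA, Matrix.one_mul]
        _ = A⁻¹ * ((Jᵀ * J) * A) := by rw [hmain]
    -- complexify the conjugation
    have hAc : IsUnit ((A.map (algebraMap ℝ ℂ)).det) := by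
      have hdet : ((A.map (algebraMap ℝ ℂ))).det = algebraMap ℝ ℂ A.det :=
        ((algebraMap ℝ ℂ).map_det _).symm
      rw [hdet]
      simp only [isUnit_iff_ne_zero] at hA ⊢
      simpa using hA
    have hAcu : IsUnit (A.map (algebraMap ℝ ℂ)) := (Matrix.isUnit_iff_isUnit_det _).mpr hAc
    set u := hAcu.unit with hu
    have hui : ((u⁻¹ : (Matrix (Fin n) (Fin n) ℂ)ˣ) : Matrix (Fin n) (Fin n) ℂ)
        = (A⁻¹).map (algebraMap ℝ ℂ) := by
      apply Units.inv_eq_of_mul_eq_one_left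
      have : (A⁻¹).map (algebraMap ℝ ℂ) * (A.map (algebraMap ℝ ℂ)) = 1 := by
        rw [← Matrix.map_mul (f := algebraMap ℝ ℂ), Matrix.nonsing_inv_mul _ hA]
        ext i j
        simp [Matrix.one_apply]
        split <;> simp
      rw [hAcu.unit_spec]
      exact this
    have hMc : ((1 - (Γᵀ)⁻¹ * Q) * (1 - Γ⁻¹ * Q)).map (algebraMap ℝ ℂ)
        = (↑u⁻¹ : Matrix (Fin n) (Fin n) ℂ) * (((Jᵀ * J).map (algebraMap ℝ ℂ))
            * (↑u : Matrix (Fin n) (Fin n) ℂ)) := by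
      rw [hconj, Matrix.map_mul (f := algebraMap ℝ ℂ), Matrix.map_mul (f := algebraMap ℝ ℂ),
        hui, hAcu.unit_spec]
    have hspec_conj : spectrum ℂ (((1 - (Γᵀ)⁻¹ * Q) * (1 - Γ⁻¹ * Q)).map (algebraMap ℝ ℂ))
        = spectrum ℂ ((Jᵀ * J).map (algebraMap ℝ ℂ)) := by
      rw [hMc, ← mul_assoc]
      exact spectrum.units_conjugate'
    obtain ⟨hnorm, hsup⟩ := norm_complexify_aux hn J
    constructor
    · rw [specRad, hspec_conj]
      exact hsup
    · -- ρ(J) ≤ ‖J‖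
      haveI : Nonempty (Fin n) := ⟨⟨0, hn⟩⟩
      have hle : specRad J ≤ l2norm J := by
        rw [specRad, ← hnorm]
        apply Real.sSup_le _ (norm_nonneg _)
        rintro - ⟨z, hz, rfl⟩
        have : z ∈ spectrum ℂ (Matrix.toEuclideanCLM (𝕜 := ℂ) (J.map (algebraMap ℝ ℂ))) := by
          rwa [AlgEquiv.spectrum_eq]
        exact spectrum.norm_le_norm_of_mem this
      have h0 : 0 ≤ specRad J := by
        apply Real.sSup_nonneg
        rintro - ⟨z, hz, rfl⟩
        exact norm_nonneg z
      exact pow_le_pow_left₀ h0 hle 2
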